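/- arXiv:1705.10570 — 3 statements merged into one kernel-verified Lean document; each statement's English description precedes it below -/
import Mathlib

section
/- Let G be an almost minimally 1-tough graph on at least 4 vertices. Then G is minimally 1-tough. -/
open SimpleGraph

section Helpers

variable {W : Type*}

private lemma reach_delete {H : SimpleGraph W} {u v x y : W}
    (hxy : H.Reachable x y) :
    (H.deleteEdges {s(u,v)}).Reachable x y ∨
    ((H.deleteEdges {s(u,v)}).Reachable x u ∧ (H.deleteEdges {s(u,v)}).Reachable v y) ∨
    ((H.deleteEdges {s(u,v)}).Reachable x v ∧ (H.deleteEdges {s(u,v)}).Reachable u y) := by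
  obtain ⟨p⟩ := hxy
  induction p with
  | nil => exact Or.inl (Reachable.refl _)
  | @cons a b c h p ih =>
    by_cases he : s(a, b) = s(u, v)
    · rw [Sym2.eq_iff] at he
      rcases he with ⟨rfl, rfl⟩ | ⟨rfl, rfl⟩
      · rcases ih with h1 | ⟨h1, h2⟩ | ⟨h1, h2⟩
        · exact Or.inr (Or.inl ⟨Reachable.refl _, h1⟩)
        · exact Or.inl (h1.symm.trans h2)
        · exact Or.inl h2
      · rcases ih with h1 | ⟨h1, h2⟩ | ⟨h1, h2⟩
        · exact Or.inr (Or.inr ⟨Reachable.refl _, h1⟩)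
        · exact Or.inl h2
        · exact Or.inl (h1.symm.trans h2)
    · have hadj : (H.deleteEdges {s(u,v)}).Adj a b := by
        rw [deleteEdges_adj]
        exact ⟨h, by simpa using he⟩
      rcases ih with h1 | ⟨h1, h2⟩ | ⟨h1, h2⟩
      · exact Or.inl (hadj.reachable.trans h1)
      · exact Or.inr (Or.inl ⟨hadj.reachable.trans h1, h2⟩)
      · exact Or.inr (Or.inr ⟨hadj.reachable.trans h1, h2⟩)

private lemma comp_map_surj {H H2 : SimpleGraph W} (h : H ≤ H2) :
    Function.Surjective
      (ConnectedComponent.map (Hom.ofLE h)) := by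
  intro c
  refine c.ind fun w => ⟨H.connectedComponentMk w, rfl⟩

private lemma card_comp_le [Finite W] {H H2 : SimpleGraph W} (h : H ≤ H2) :
    Nat.card H2.ConnectedComponent ≤ Nat.card H.ConnectedComponent :=
  Nat.card_le_card_of_surjective _ (comp_map_surj h)

private lemma comp_map_cases {H : SimpleGraph W} {u v : W}
    (c d : (H.deleteEdges {s(u,v)}).ConnectedComponent)
    (hcd : ConnectedComponent.map (Hom.ofLE (H.deleteEdges_le _)) c =
      ConnectedComponent.map (Hom.ofLE (H.deleteEdges_le _)) d) :
    c = d ∨ (c = (H.deleteEdges {s(u,v)}).connectedComponentMk v ∧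
        d = (H.deleteEdges {s(u,v)}).connectedComponentMk u)
      ∨ (c = (H.deleteEdges {s(u,v)}).connectedComponentMk u ∧
        d = (H.deleteEdges {s(u,v)}).connectedComponentMk v) := by
  revert hcd
  refine ConnectedComponent.ind₂ (fun x y hcd => ?_) c d
  simp only [ConnectedComponent.map_mk] at hcd
  have hr : H.Reachable x y := by
    simpa using (ConnectedComponent.eq).mp hcd
  rcases reach_delete (u := u) (v := v) hr with h1 | ⟨h1, h2⟩ | ⟨h1, h2⟩
  · exact Or.inl (ConnectedComponent.sound h1)
  · exact Or.inr (Or.inr ⟨ConnectedComponent.sound h1, ConnectedComponent.sound h2.symm⟩)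
  · exact Or.inr (Or.inl ⟨ConnectedComponent.sound h1, ConnectedComponent.sound h2.symm⟩)

private lemma card_comp_delete_le [Finite W] (H : SimpleGraph W) (u v : W) :
    Nat.card (H.deleteEdges {s(u,v)}).ConnectedComponent ≤
      Nat.card H.ConnectedComponent + 1 := by
  classical
  cases isEmpty_or_nonempty W
  · have : IsEmpty (H.deleteEdges {s(u,v)}).ConnectedComponent := by
      constructor; intro c; exact c.ind (fun w => isEmptyElim w)
    simp [Nat.card_of_isEmpty]
  · have hinj : Function.Injective
        (fun c : {c : (H.deleteEdges {s(u,v)}).ConnectedComponent //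
            c ≠ (H.deleteEdges {s(u,v)}).connectedComponentMk v} =>
          ConnectedComponent.map (Hom.ofLE (H.deleteEdges_le _)) c.1) := by
      rintro ⟨c, hc⟩ ⟨d, hd⟩ h
      simp only at h
      rcases comp_map_cases c d h with h1 | ⟨h1, _⟩ | ⟨_, h2⟩
      · exact Subtype.ext h1
      · exact absurd h1 hc
      · exact absurd h2 hd
    have h1 : Nat.card {c : (H.deleteEdges {s(u,v)}).ConnectedComponent //
          c ≠ (H.deleteEdges {s(u,v)}).connectedComponentMk v}
        ≤ Nat.card H.ConnectedComponent := Nat.card_le_card_of_injective _ hinj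
    have h2 : Nat.card {c : (H.deleteEdges {s(u,v)}).ConnectedComponent //
          c ≠ (H.deleteEdges {s(u,v)}).connectedComponentMk v}
        = ({(H.deleteEdges {s(u,v)}).connectedComponentMk v}ᶜ :
            Set (H.deleteEdges {s(u,v)}).ConnectedComponent).ncard := by
      rw [← Nat.card_coe_set_eq]
      exact Nat.card_congr (Equiv.subtypeEquivRight (by simp))
    have h3 := Set.ncard_add_ncard_compl
      ({(H.deleteEdges {s(u,v)}).connectedComponentMk v} :
        Set (H.deleteEdges {s(u,v)}).ConnectedComponent)
    rw [Set.ncard_singleton] at h3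
    have h4 : 0 < Nat.card (H.deleteEdges {s(u,v)}).ConnectedComponent := by
      haveI : Nonempty (H.deleteEdges {s(u,v)}).ConnectedComponent :=
        ⟨(H.deleteEdges {s(u,v)}).connectedComponentMk v⟩
      exact Nat.card_pos
    omega

private lemma card_comp_delete_eq [Finite W] (H : SimpleGraph W) (u v : W)
    (hr : (H.deleteEdges {s(u,v)}).Reachable u v) :
    Nat.card (H.deleteEdges {s(u,v)}).ConnectedComponent =
      Nat.card H.ConnectedComponent := by
  refine Nat.card_eq_of_bijective
    (ConnectedComponent.map (Hom.ofLE (H.deleteEdges_le _))) ⟨?_, comp_map_surj _⟩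
  intro c d h
  rcases comp_map_cases c d h with h1 | ⟨h1, h2⟩ | ⟨h1, h2⟩
  · exact h1
  · rw [h1, h2]; exact ConnectedComponent.sound hr.symm
  · rw [h1, h2]; exact ConnectedComponent.sound hr

end Helpers

section Commute

variable {V : Type*} (G : SimpleGraph V) {S : Set V} {u v : V}

private lemma induce_delete_of_mem (hu : u ∈ S) :
    (G.deleteEdges {s(u,v)}).induce (Sᶜ : Set V) = G.induce (Sᶜ : Set V) := by
  ext a b
  simp only [comap_adj, Function.Embedding.coe_subtype, deleteEdges_adj, Set.mem_singleton_iff]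
  refine ⟨fun h => h.1, fun h => ⟨h, fun hab => ?_⟩⟩
  rw [Sym2.eq_iff] at hab
  rcases hab with ⟨ha, _⟩ | ⟨_, hb⟩
  · exact a.2 (ha ▸ hu)
  · exact b.2 (hb ▸ hu)

private lemma induce_delete_of_not_mem (hu : u ∈ Sᶜ) (hv : v ∈ Sᶜ) :
    (G.deleteEdges {s(u,v)}).induce (Sᶜ : Set V) =
      (G.induce (Sᶜ : Set V)).deleteEdges {s(⟨u, hu⟩, ⟨v, hv⟩)} := by
  ext a b
  simp only [comap_adj, Function.Embedding.coe_subtype, deleteEdges_adj, Set.mem_singleton_iff,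
    Sym2.eq_iff, Subtype.ext_iff]

end Commute

/-- Number of connected components after deleting vertex set `S`. -/
noncomputable def numComp {V : Type*} (G : SimpleGraph V) (S : Set V) : ℕ :=
  Nat.card (G.induce (Sᶜ : Set V)).ConnectedComponent

/-- `S` is a cutset: its removal leaves more than one component. -/
def IsCutset {V : Type*} (G : SimpleGraph V) (S : Set V) : Prop :=
  1 < numComp G S

/-- `G` is `t`-tough: every cutset `S` leaves at most `|S|/t` components.
Equivalently `τ(G) ≥ t` (for `t > 0`). -/
def IsTTough {V : Type*} (t : ℚ) (G : SimpleGraph V) : Prop :=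
  ∀ S : Set V, IsCutset G S → t * (numComp G S : ℚ) ≤ (Nat.card S : ℚ)

/-- `τ(G) = t`: `G` is `t`-tough and `t` is the largest such value. -/
def ToughnessEq {V : Type*} (G : SimpleGraph V) (t : ℚ) : Prop :=
  IsTTough t G ∧ ∀ t' : ℚ, IsTTough t' G → t' ≤ t

/-- The toughness of `G` equals `t`, characterized as the minimum of
`|S|/ω(G−S)` over cutsets `S` (valid for connected noncomplete graphs). -/
def ToughnessMin {V : Type*} (G : SimpleGraph V) (t : ℚ) : Prop :=
  IsLeast {q : ℚ | ∃ S : Set V, IsCutset G S ∧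
    q = (Nat.card S : ℚ) / (numComp G S : ℚ)} t

/-- `G` is minimally `t`-tough. -/
def MinTough {V : Type*} (t : ℚ) (G : SimpleGraph V) : Prop :=
  ToughnessEq G t ∧ ∀ e ∈ G.edgeSet, ¬ IsTTough t (G.deleteEdges {e})

/-- `G` is almost minimally 1-tough: `τ(G) ≥ 1` and `τ(G−e) < 1` for all edges. -/
def AlmostMinOneTough {V : Type*} (G : SimpleGraph V) : Prop :=
  IsTTough 1 G ∧ ∀ e ∈ G.edgeSet, ¬ IsTTough 1 (G.deleteEdges {e})

/-- The independence number of `G`. -/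
noncomputable def indepNum {V : Type*} [Fintype V] (G : SimpleGraph V) : ℕ :=
  sSup {n | ∃ s : Set V, s.Pairwise (fun x y => ¬ G.Adj x y) ∧ Nat.card s = n}

/-- `G` is α-critical: deleting any edge increases the independence number. -/
def AlphaCritical {V : Type*} [Fintype V] (G : SimpleGraph V) : Prop :=
  ∀ e ∈ G.edgeSet, _root_.indepNum G < _root_.indepNum (G.deleteEdges {e})

section MainLemmas

variable {V : Type*} [Fintype V]

/-- one symmetric branch of the construction -/
private lemma branch (G : SimpleGraph V) {S : Set V} {u v : V}
    (hu : u ∈ Sᶜ) (hv : v ∈ Sᶜ) (huv : G.Adj u v)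
    (w : (Sᶜ : Set V))
    (hwu : (w : V) ≠ u) (hwv : (w : V) ≠ v)
    (hwreach : ((G.induce (Sᶜ : Set V)).deleteEdges {s(⟨u, hu⟩, ⟨v, hv⟩)}).Reachable w ⟨u, hu⟩)
    (hnr : ¬ ((G.induce (Sᶜ : Set V)).deleteEdges {s(⟨u, hu⟩, ⟨v, hv⟩)}).Reachable ⟨u, hu⟩ ⟨v, hv⟩) :
    2 ≤ numComp G (S ∪ {u}) := by
  classical
  have hwT : (w : V) ∈ (S ∪ {u})ᶜ := by
    intro h
    rcases h with h | h
    · exact w.2 h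
    · exact hwu h
  have hvT : v ∈ (S ∪ {u})ᶜ := by
    intro h
    rcases h with h | h
    · exact hv h
    · exact huv.ne' h
  have hsub : ∀ x : V, x ∈ (S ∪ {u})ᶜ → x ∈ Sᶜ := fun x hx h => hx (Or.inl h)
  let f : G.induce ((S ∪ {u})ᶜ : Set V) →g
      (G.induce (Sᶜ : Set V)).deleteEdges {s(⟨u, hu⟩, ⟨v, hv⟩)} :=
    { toFun := fun x => ⟨x.1, hsub x.1 x.2⟩
      map_rel' := by
        rintro ⟨a, ha⟩ ⟨b, hb⟩ hab
        simp only [comap_adj, Function.Embedding.coe_subtype] at hab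
        rw [deleteEdges_adj]
        refine ⟨hab, ?_⟩
        simp only [Set.mem_singleton_iff, Sym2.eq_iff, Subtype.ext_iff]
        rintro (⟨h1, h2⟩ | ⟨h1, h2⟩)
        · exact ha (Or.inr h1)
        · exact hb (Or.inr h2) }
  have hkey : ¬ (G.induce (((S ∪ {u})ᶜ) : Set V)).Reachable ⟨w, hwT⟩ ⟨v, hvT⟩ := by
    intro hr
    have hmap := hr.map f
    have hwv' : ((G.induce (Sᶜ : Set V)).deleteEdges
        {s(⟨u, hu⟩, ⟨v, hv⟩)}).Reachable w ⟨v, hv⟩ := by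
      convert hmap using 2 <;> rfl
    exact hnr (hwreach.symm.trans hwv')
  have hnt : Nontrivial (G.induce (((S ∪ {u})ᶜ) : Set V)).ConnectedComponent :=
    ⟨(G.induce _).connectedComponentMk ⟨w, hwT⟩,
      (G.induce _).connectedComponentMk ⟨v, hvT⟩, fun h => hkey (ConnectedComponent.exact h)⟩
  have h9 : 1 < Nat.card (G.induce (((S ∪ {u})ᶜ) : Set V)).ConnectedComponent :=
    Finite.one_lt_card_iff_nontrivial.mpr hnt
  rw [numComp]
  omega

private lemma exists_good_cutset (G : SimpleGraph V)
    (h1 : IsTTough 1 G) (h2 : ∀ e ∈ G.edgeSet, ¬ IsTTough 1 (G.deleteEdges {e}))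
    (hcard : 4 ≤ Fintype.card V) :
    ∃ T : Set V, IsCutset G T ∧ (Nat.card T : ℚ) ≤ (numComp G T : ℚ) := by
  classical
  -- G has an edge
  have hE : G.edgeSet.Nonempty := by
    by_contra hE
    rw [Set.not_nonempty_iff_eq_empty, edgeSet_eq_empty] at hE
    have hbot : (G.induce ((∅ᶜ : Set V))) = ⊥ := by
      subst hE; ext a b; simp
    have hnum : numComp G ∅ = Fintype.card V := by
      rw [numComp, hbot]
      have hbij : Function.Bijective
          ((⊥ : SimpleGraph ((∅ᶜ : Set V))).connectedComponentMk) := by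
        constructor
        · intro a b h
          exact reachable_bot.mp (ConnectedComponent.exact h)
        · intro c; exact c.ind fun w => ⟨w, rfl⟩
      rw [← Nat.card_eq_of_bijective _ hbij]
      have hu : Nat.card ((∅ᶜ : Set V)) = Nat.card V := by
        rw [Nat.card_coe_set_eq, Set.compl_empty, Set.ncard_univ]
      rw [hu, Nat.card_eq_fintype_card]
    have hcut : IsCutset G ∅ := by rw [IsCutset, hnum]; omega
    have := h1 ∅ hcut
    rw [hnum] at this
    simp at this
    omega
  obtain ⟨e, he⟩ := hE
  induction e with
  | _ u v =>
  have huv : G.Adj u v := he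
  have hne := h2 _ he
  rw [IsTTough] at hne
  push_neg at hne
  obtain ⟨S, hScut, hSlt⟩ := hne
  set k := Nat.card S with hk
  have hklt' : k < numComp (G.deleteEdges {s(u,v)}) S := by
    rw [one_mul] at hSlt
    exact_mod_cast hSlt
  rw [IsCutset] at hScut
  -- u and v are both outside S
  have huS : u ∉ S := by
    intro hus
    have heq : numComp (G.deleteEdges {s(u,v)}) S = numComp G S := by
      rw [numComp, numComp, induce_delete_of_mem G hus]
    have hGcut : IsCutset G S := by rw [IsCutset, ← heq]; omega
    have := h1 S hGcut
    rw [one_mul, ← heq] at this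
    have : numComp (G.deleteEdges {s(u,v)}) S ≤ k := by exact_mod_cast this
    omega
  have hvS : v ∉ S := by
    intro hvs
    have heq : numComp (G.deleteEdges {s(u,v)}) S = numComp G S := by
      rw [numComp, numComp, Sym2.eq_swap, induce_delete_of_mem G hvs]
    have hGcut : IsCutset G S := by rw [IsCutset, ← heq]; omega
    have := h1 S hGcut
    rw [one_mul, ← heq] at this
    have : numComp (G.deleteEdges {s(u,v)}) S ≤ k := by exact_mod_cast this
    omega
  have hcomm : numComp (G.deleteEdges {s(u,v)}) S =
      Nat.card ((G.induce (Sᶜ : Set V)).deleteEdges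
        {s(⟨u, huS⟩, ⟨v, hvS⟩)}).ConnectedComponent := by
    rw [numComp, induce_delete_of_not_mem G huS hvS]
  have hle1 : numComp G S ≤ numComp (G.deleteEdges {s(u,v)}) S := by
    rw [hcomm, numComp]
    exact card_comp_le (deleteEdges_le _)
  have hle2 : numComp (G.deleteEdges {s(u,v)}) S ≤ numComp G S + 1 := by
    rw [hcomm, numComp]
    exact card_comp_delete_le _ _ _
  by_cases hn : 2 ≤ numComp G S
  · -- S itself is a good cutset
    have hGcut : IsCutset G S := by rw [IsCutset]; omega
    have hnk := h1 S hGcut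
    rw [one_mul] at hnk
    have hnk' : numComp G S ≤ k := by exact_mod_cast hnk
    refine ⟨S, hGcut, ?_⟩
    have : k ≤ numComp G S := by omega
    exact_mod_cast this
  · -- G − S is connected, (G−e) − S has exactly two components
    push_neg at hn
    have hn2 : numComp (G.deleteEdges {s(u,v)}) S = 2 := by omega
    have hn1 : numComp G S = 1 := by omega
    have hk1 : k ≤ 1 := by omega
    -- all vertices of Sᶜ are reachable in G.induce Sᶜ
    have hall : ∀ x y : (Sᶜ : Set V), (G.induce (Sᶜ : Set V)).Reachable x y := by
      intro x y
      rw [numComp] at hn1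
      obtain ⟨hss, _⟩ := (Nat.card_eq_one_iff_unique).mp hn1
      exact ConnectedComponent.exact (Subsingleton.elim _ _)
    have hnr : ¬ ((G.induce (Sᶜ : Set V)).deleteEdges
        {s(⟨u, huS⟩, ⟨v, hvS⟩)}).Reachable ⟨u, huS⟩ ⟨v, hvS⟩ := by
      intro hr
      have := card_comp_delete_eq (G.induce (Sᶜ : Set V)) ⟨u, huS⟩ ⟨v, hvS⟩ hr
      rw [← hcomm, ← numComp] at this
      omega
    -- find a third vertex
    have hcardSc : 3 ≤ Nat.card (Sᶜ : Set V) := by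
      have h5 := Set.ncard_add_ncard_compl S
      have h6 : Nat.card (Sᶜ : Set V) = (Sᶜ : Set V).ncard := Nat.card_coe_set_eq _
      have h7 : S.ncard = k := by rw [hk, Nat.card_coe_set_eq]
      have h8 : Nat.card V = Fintype.card V := Nat.card_eq_fintype_card
      omega
    obtain ⟨w, hwu, hwv⟩ : ∃ w : (Sᶜ : Set V), w ≠ ⟨u, huS⟩ ∧ w ≠ ⟨v, hvS⟩ := by
      by_contra hco
      push_neg at hco
      have : (Set.univ : Set (Sᶜ : Set V)) ⊆ {⟨u, huS⟩, ⟨v, hvS⟩} := by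
        intro x _
        by_cases hx : x = ⟨u, huS⟩
        · exact Or.inl hx
        · exact Or.inr (hco x hx)
      have hle := Set.ncard_le_ncard this (Set.toFinite _)
      have h6 : (Set.univ : Set (Sᶜ : Set V)).ncard = Nat.card (Sᶜ : Set V) :=
        Set.ncard_univ _
      have h7 : ({⟨u, huS⟩, ⟨v, hvS⟩} : Set (Sᶜ : Set V)).ncard ≤ 2 := by
        apply le_trans (Set.ncard_insert_le _ _)
        simp
      omega
    -- w reaches u or v in the deleted graph
    have hwreach : ((G.induce (Sᶜ : Set V)).deleteEdges
          {s(⟨u, huS⟩, ⟨v, hvS⟩)}).Reachable w ⟨u, huS⟩ ∨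
        ((G.induce (Sᶜ : Set V)).deleteEdges
          {s(⟨u, huS⟩, ⟨v, hvS⟩)}).Reachable w ⟨v, hvS⟩ := by
      rcases reach_delete (u := ⟨u, huS⟩) (v := ⟨v, hvS⟩) (hall w ⟨u, huS⟩) with
        h | ⟨h, _⟩ | ⟨h, _⟩
      · exact Or.inl h
      · exact Or.inl h
      · exact Or.inr h
    have hcardT : ∀ z : V, z ∉ S → (Nat.card (S ∪ {z} : Set V) : ℚ) ≤ 2 := by
      intro z hz
      rw [Nat.card_coe_set_eq, Set.union_singleton, Set.ncard_insert_of_notMem hz (Set.toFinite _)]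
      rw [hk, Nat.card_coe_set_eq] at hk1
      have : S.ncard + 1 ≤ 2 := by omega
      exact_mod_cast this
    rcases hwreach with hwr | hwr
    · have hb := branch G huS hvS huv w
        (fun h => hwu (Subtype.ext h)) (fun h => hwv (Subtype.ext h)) hwr hnr
      refine ⟨S ∪ {u}, by rw [IsCutset]; omega, ?_⟩
      calc (Nat.card (S ∪ {u} : Set V) : ℚ) ≤ 2 := hcardT u huS
        _ ≤ _ := by exact_mod_cast hb
    · have hnr' : ¬ ((G.induce (Sᶜ : Set V)).deleteEdges
          {s(⟨v, hvS⟩, ⟨u, huS⟩)}).Reachable ⟨v, hvS⟩ ⟨u, huS⟩ := by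
        rw [Sym2.eq_swap]
        exact fun h => hnr h.symm
      have hwr' : ((G.induce (Sᶜ : Set V)).deleteEdges
          {s(⟨v, hvS⟩, ⟨u, huS⟩)}).Reachable w ⟨v, hvS⟩ := by
        rw [Sym2.eq_swap]; exact hwr
      have hb := branch G hvS huS huv.symm w
        (fun h => hwv (Subtype.ext h)) (fun h => hwu (Subtype.ext h)) hwr' hnr'
      refine ⟨S ∪ {v}, by rw [IsCutset]; omega, ?_⟩
      calc (Nat.card (S ∪ {v} : Set V) : ℚ) ≤ 2 := hcardT v hvS
        _ ≤ _ := by exact_mod_cast hb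

end MainLemmas

theorem stmt5 {V : Type*} [Fintype V] (G : SimpleGraph V)
    (hG : AlmostMinOneTough G) (hcard : 4 ≤ Fintype.card V) :
    MinTough 1 G := by
  obtain ⟨h1, h2⟩ := hG
  refine ⟨⟨h1, ?_⟩, h2⟩
  intro t' ht'
  obtain ⟨T, hcut, hle⟩ := exists_good_cutset G h1 h2 hcard
  have ht := ht' T hcut
  rw [IsCutset] at hcut
  have hpos : (0 : ℚ) < (numComp G T : ℚ) := by exact_mod_cast Nat.lt_of_lt_of_le Nat.zero_lt_one hcut.le
  nlinarith [le_trans ht hle]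
end

section
/- Let a, b be positive integers with a/b ≤ 1/2, and let H be the graph on vertex sets V = {v₁,…,v_a}, U = {u₁,…,u_{b−a}}, W = {w₁,…,w_a}, where V forms a clique, every vertex of V is adjacent to every vertex of U, and v_i is adjacent to w_i for each i. Then the toughness of H equals a/b. -/
open SimpleGraph

/-- The graph `H_{a/b}`: a clique `V` of size `a`, an independent set `U` of
size `b−a` completely joined to `V`, and a pendant vertex `w_i` attached to
each `v_i ∈ V`. -/
def Hab (a b : ℕ) : SimpleGraph (Fin a ⊕ (Fin (b - a) ⊕ Fin a)) :=
  SimpleGraph.fromRel (fun x y =>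
    match x, y with
    | Sum.inl _, Sum.inl _ => True
    | Sum.inl _, Sum.inr (Sum.inl _) => True
    | Sum.inl i, Sum.inr (Sum.inr j) => (i : ℕ) = (j : ℕ)
    | _, _ => False)

lemma card_cc_le {V β : Type*} [Finite β] (G : SimpleGraph V) (f : V → β)
    (h1 : ∀ x y, G.Adj x y → f x = f y)
    (h2 : ∀ x y, f x = f y → G.Reachable x y) :
    Nat.card G.ConnectedComponent ≤ Nat.card β := by
  have hr : ∀ x y, G.Reachable x y → f x = f y := by
    rintro x y ⟨w⟩
    induction w with
    | nil => rfl
    | cons h p ih => exact (h1 _ _ h).trans ih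
  let F : G.ConnectedComponent → β := Quot.lift f hr
  apply Nat.card_le_card_of_injective F
  intro c d h
  induction c using SimpleGraph.ConnectedComponent.ind with | _ x => ?_
  induction d using SimpleGraph.ConnectedComponent.ind with | _ y => ?_
  exact ConnectedComponent.eq.mpr (h2 x y h)

lemma card_cc_eq_of_no_adj {V : Type*} (G : SimpleGraph V) (h : ∀ x y, ¬ G.Adj x y) :
    Nat.card G.ConnectedComponent = Nat.card V := by
  have hG : G = ⊥ := by ext x y; simp [h x y]
  subst hG
  refine (Nat.card_eq_of_bijective (⊥ : SimpleGraph V).connectedComponentMk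
    ⟨fun x y hxy => ?_, fun c => c.exists_rep⟩).symm
  exact (reachable_bot.mp (ConnectedComponent.eq.mp hxy))

section HabFacts
variable (a b : ℕ)

lemma hab_VV {i j : Fin a} (h : i ≠ j) : (Hab a b).Adj (Sum.inl i) (Sum.inl j) := by
  rw [Hab, fromRel_adj]
  exact ⟨by simp [h], Or.inl trivial⟩

lemma hab_VU (i : Fin a) (u : Fin (b - a)) :
    (Hab a b).Adj (Sum.inl i) (Sum.inr (Sum.inl u)) := by
  rw [Hab, fromRel_adj]
  exact ⟨by simp, Or.inl trivial⟩

lemma hab_VW (i : Fin a) : (Hab a b).Adj (Sum.inl i) (Sum.inr (Sum.inr i)) := by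
  rw [Hab, fromRel_adj]
  exact ⟨by simp, Or.inl rfl⟩

lemma hab_noRR (x y : Fin (b - a) ⊕ Fin a) :
    ¬ (Hab a b).Adj (Sum.inr x) (Sum.inr y) := by
  rw [Hab, fromRel_adj]
  rintro ⟨-, h | h⟩ <;> rcases x with u | w <;> rcases y with u' | w' <;> exact h

lemma hab_VW_eq {i j : Fin a} (h : (Hab a b).Adj (Sum.inl i) (Sum.inr (Sum.inr j))) :
    i = j := by
  rw [Hab, fromRel_adj] at h
  rcases h with ⟨-, h | h⟩
  · exact Fin.ext h
  · exact h.elim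

lemma hab_not_UW (u : Fin (b-a)) (j : Fin a) :
    ¬ (Hab a b).Adj (Sum.inl j) (Sum.inr (Sum.inl u)) → False := fun h => h (hab_VU a b j u)

end HabFacts

theorem stmt6 (a b : ℕ) (ha : 0 < a) (hb : 0 < b)
    (hab : (a : ℚ) / b ≤ 1 / 2) :
    ToughnessEq (Hab a b) ((a : ℚ) / b) := by
  classical
  have hbQ : (0:ℚ) < b := by exact_mod_cast hb
  have h2ab : 2 * a ≤ b := by
    rw [div_le_div_iff₀ hbQ (by norm_num)] at hab
    have : (2 * a : ℚ) ≤ (b : ℚ) := by linarith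
    exact_mod_cast this
  have hba : a ≤ b := by omega
  constructor
  · -- lower bound
    intro S hS
    have key : a * numComp (Hab a b) S ≤ b * Nat.card S := by
      by_cases hV : ∃ i : Fin a, Sum.inl i ∉ S
      · obtain ⟨i₀, hi₀⟩ := hV
        set G' := (Hab a b).induce (Sᶜ : Set _) with hG'
        let T := {i : Fin a // Sum.inl i ∈ S}
        let f : (Fin a ⊕ (Fin (b-a) ⊕ Fin a)) → Option T := fun x =>
          match x with
          | Sum.inr (Sum.inr j) => if h : Sum.inl j ∈ S then some ⟨j, h⟩ else none
          | _ => none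
        have hfl : ∀ i : Fin a, f (Sum.inl i) = none := fun _ => rfl
        have hfu : ∀ u : Fin (b-a), f (Sum.inr (Sum.inl u)) = none := fun _ => rfl
        have hfw : ∀ (j : Fin a) (h : Sum.inl j ∈ S), f (Sum.inr (Sum.inr j)) = some ⟨j, h⟩ :=
          fun j h => dif_pos h
        have hfw' : ∀ j : Fin a, Sum.inl j ∉ S → f (Sum.inr (Sum.inr j)) = none :=
          fun j h => dif_neg h
        -- f is constant on edges
        have hadj : ∀ x y : (Sᶜ : Set _), G'.Adj x y → f x.1 = f y.1 := by
          rintro ⟨x, hx⟩ ⟨y, hy⟩ hxy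
          have hxy' : (Hab a b).Adj x y := hxy
          rcases x with i | u | j <;> rcases y with i' | u' | j'
          · rfl
          · rfl
          · have hij : i = j' := hab_VW_eq a b hxy'
            subst hij
            rw [hfl i, hfw' i hx]
          · rfl
          · exact absurd hxy' (hab_noRR a b _ _)
          · exact absurd hxy' (hab_noRR a b _ _)
          · have hij : i' = j := hab_VW_eq a b hxy'.symm
            subst hij
            rw [hfl i', hfw' i' hy]
          · exact absurd hxy' (hab_noRR a b _ _)
          · exact absurd hxy' (hab_noRR a b _ _)
        -- vertices labeled none are reachable from v' in G'
        let v' : (Sᶜ : Set _) := ⟨Sum.inl i₀, hi₀⟩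
        have hreachV : ∀ (i : Fin a) (h : Sum.inl i ∉ S),
            G'.Reachable ⟨Sum.inl i, h⟩ v' := by
          intro i h
          by_cases hii : i = i₀
          · subst hii; exact Reachable.refl _
          · exact Adj.reachable (by exact hab_VV a b hii : G'.Adj ⟨Sum.inl i, h⟩ v')
        have hnone : ∀ x : (Sᶜ : Set _), f x.1 = none → G'.Reachable x v' := by
          rintro ⟨x, hx⟩ hfx
          rcases x with i | u | j
          · exact hreachV i hx
          · exact Adj.reachable
              (by exact ((hab_VU a b i₀ u).symm) : G'.Adj ⟨Sum.inr (Sum.inl u), hx⟩ v')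
          · have hjS : Sum.inl j ∉ S := by
              by_contra h
              rw [hfw j h] at hfx
              exact Option.some_ne_none _ hfx
            exact (Adj.reachable
              (by exact (hab_VW a b j).symm :
                G'.Adj ⟨Sum.inr (Sum.inr j), hx⟩ ⟨Sum.inl j, hjS⟩)).trans (hreachV j hjS)
        have hreach : ∀ x y : (Sᶜ : Set _), f x.1 = f y.1 → G'.Reachable x y := by
          intro x y hxy
          rcases hfy : f y.1 with _ | t
          · exact (hnone x (by rw [hxy, hfy])).trans (hnone y hfy).symm
          · -- both map to some t : both are the pendant vertex w_{t}
            have hfx : f x.1 = some t := by rw [hxy, hfy]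
            have hxw : x.1 = Sum.inr (Sum.inr t.1) := by
              rcases x with ⟨i | u | j, hx⟩
              · simp [hfl] at hfx
              · simp [hfu] at hfx
              · by_cases h : Sum.inl j ∈ S
                · rw [hfw j h] at hfx
                  simp only [Option.some_inj] at hfx
                  simp [← hfx]
                · rw [hfw' j h] at hfx; exact absurd hfx (by simp)
            have hyw : y.1 = Sum.inr (Sum.inr t.1) := by
              rcases y with ⟨i | u | j, hy⟩
              · simp [hfl] at hfy
              · simp [hfu] at hfy
              · by_cases h : Sum.inl j ∈ S
                · rw [hfw j h] at hfy
                  simp only [Option.some_inj] at hfy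
                  simp [← hfy]
                · rw [hfw' j h] at hfy; exact absurd hfy (by simp)
            have : x = y := Subtype.ext (hxw.trans hyw.symm)
            rw [this]
        have hb1 : numComp (Hab a b) S ≤ Nat.card T + 1 := by
          have := card_cc_le G' (fun x => f x.1) hadj hreach
          calc numComp (Hab a b) S = Nat.card G'.ConnectedComponent := rfl
            _ ≤ Nat.card (Option T) := this
            _ = Nat.card T + 1 := by
                rw [Nat.card_congr (Equiv.optionEquivSumPUnit.{0} T), Nat.card_sum]; simp
        have hb2 : Nat.card T ≤ Nat.card S := by
          apply Nat.card_le_card_of_injective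
            (fun t : T => (⟨Sum.inl t.1, t.2⟩ : S))
          intro t t' h
          simp only [Subtype.mk.injEq, Sum.inl.injEq] at h
          exact Subtype.ext h
        have hb3 : 1 ≤ Nat.card T := by
          have hcut : 1 < numComp (Hab a b) S := hS
          omega
        calc a * numComp (Hab a b) S ≤ a * (Nat.card T + 1) := Nat.mul_le_mul_left _ hb1
          _ ≤ a * (2 * Nat.card T) := Nat.mul_le_mul_left _ (by omega)
          _ = (2 * a) * Nat.card T := by ring
          _ ≤ b * Nat.card T := Nat.mul_le_mul_right _ h2ab
          _ ≤ b * Nat.card S := Nat.mul_le_mul_left _ hb2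
      · -- all of V is deleted
        push_neg at hV
        set G' := (Hab a b).induce (Sᶜ : Set _) with hG'
        have hsurj : numComp (Hab a b) S ≤ Nat.card (Sᶜ : Set _) := by
          apply Nat.card_le_card_of_surjective G'.connectedComponentMk
          exact fun c => c.exists_rep
        have hsum : Nat.card S + Nat.card (Sᶜ : Set _) =
            Nat.card (Fin a ⊕ (Fin (b-a) ⊕ Fin a)) := by
          simp only [Nat.card_coe_set_eq]
          rw [Set.ncard_add_ncard_compl]
        have htot : Nat.card (Fin a ⊕ (Fin (b-a) ⊕ Fin a)) = a + b := by
          rw [Nat.card_sum, Nat.card_sum]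
          simp [Nat.card_eq_fintype_card]
          omega
        have hsle : a ≤ Nat.card S := by
          have := Nat.card_le_card_of_injective
            (fun i : Fin a => (⟨Sum.inl i, hV i⟩ : S))
            (by intro i j h
                simp only [Subtype.mk.injEq, Sum.inl.injEq] at h
                exact h)
          simpa using this
        have hac : a * numComp (Hab a b) S ≤ a * Nat.card (Sᶜ : Set _) :=
          Nat.mul_le_mul_left _ hsurj
        have hkey : a * Nat.card (Sᶜ : Set _) + a * Nat.card S = a * (a + b) := by
          rw [← Nat.mul_add, Nat.add_comm (Nat.card (Sᶜ : Set _)), hsum, htot]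
        have h2 : a * (a + b) ≤ Nat.card S * (a + b) := Nat.mul_le_mul_right _ hsle
        nlinarith [hac, hkey, h2]
    rw [div_mul_eq_mul_div, div_le_iff₀ hbQ]
    have : ((a * numComp (Hab a b) S : ℕ) : ℚ) ≤ ((b * Nat.card S : ℕ) : ℚ) := by
      exact_mod_cast key
    push_cast at this
    linarith
  · -- upper bound: the cutset V
    intro t' ht'
    set S₀ : Set (Fin a ⊕ (Fin (b-a) ⊕ Fin a)) := Set.range Sum.inl with hS₀
    have hcompl : (S₀ᶜ : Set _) = Set.range Sum.inr := Set.compl_range_inl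
    have hnoadj : ∀ x y : (S₀ᶜ : Set _),
        ¬ ((Hab a b).induce (S₀ᶜ : Set _)).Adj x y := by
      rintro ⟨x, hx⟩ ⟨y, hy⟩ hxy
      rw [hcompl] at hx hy
      obtain ⟨x', rfl⟩ := hx
      obtain ⟨y', rfl⟩ := hy
      exact hab_noRR a b x' y' hxy
    have hcard : numComp (Hab a b) S₀ = b := by
      unfold numComp
      rw [card_cc_eq_of_no_adj _ hnoadj]
      have : Nat.card (S₀ᶜ : Set _) = Nat.card (Fin (b-a) ⊕ Fin a) := by
        rw [hcompl]
        exact Nat.card_range_of_injective Sum.inr_injective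
      rw [this, Nat.card_sum]
      simp [Nat.card_eq_fintype_card]
      omega
    have hcardS : Nat.card S₀ = a := by
      rw [hS₀, Nat.card_range_of_injective Sum.inl_injective]
      simp
    have hcut : IsCutset (Hab a b) S₀ := by
      unfold IsCutset
      rw [hcard]; omega
    have := ht' S₀ hcut
    rw [hcard, hcardS] at this
    rw [div_le_div_iff₀ hbQ (by norm_num)] at hab
    rw [le_div_iff₀ hbQ]
    exact this
end

section
/- Let G be an α-critical graph, let v be a vertex of G, and let G′ be obtained from G by replacing v with a clique K (each vertex of K adjacent to all other vertices of K and to all neighbors of v in G). Then G′ is α-critical. -/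
open SimpleGraph

/-- Replace the vertex `v` of `G` by a clique on `k` vertices, each adjacent
to all the other clique vertices and to all neighbors of `v` in `G`. -/
def blowup {V : Type*} (G : SimpleGraph V) (v : V) (k : ℕ) :
    SimpleGraph ({x : V // x ≠ v} ⊕ Fin k) :=
  SimpleGraph.fromRel (fun p q =>
    match p, q with
    | Sum.inl x, Sum.inl y => G.Adj x.1 y.1
    | Sum.inl x, Sum.inr _ => G.Adj x.1 v
    | Sum.inr _, Sum.inr _ => True
    | _, _ => False)

set_option linter.unusedSectionVars false

section Aux

variable {V : Type*} [Fintype V]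

lemma indep_bddAbove (G : SimpleGraph V) :
    BddAbove {n | ∃ s : Set V, s.Pairwise (fun x y => ¬ G.Adj x y) ∧ Nat.card s = n} := by
  refine ⟨Fintype.card V, ?_⟩
  rintro n ⟨s, -, rfl⟩
  have := Nat.card_le_card_of_injective (fun x : s => (x : V)) Subtype.val_injective
  simpa using this

lemma indep_nonempty (G : SimpleGraph V) :
    Set.Nonempty {n | ∃ s : Set V, s.Pairwise (fun x y => ¬ G.Adj x y) ∧ Nat.card s = n} :=
  ⟨0, ∅, by simp, by simp⟩

lemma le_indepNum (G : SimpleGraph V) (s : Set V)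
    (h : s.Pairwise (fun x y => ¬ G.Adj x y)) : Nat.card s ≤ _root_.indepNum G :=
  le_csSup (indep_bddAbove G) ⟨s, h, rfl⟩

lemma exists_max_indep (G : SimpleGraph V) :
    ∃ s : Set V, s.Pairwise (fun x y => ¬ G.Adj x y) ∧ Nat.card s = _root_.indepNum G :=
  Nat.sSup_mem (indep_nonempty G) (indep_bddAbove G)

lemma blowup_adj_inl_inl (G : SimpleGraph V) (v : V) (k : ℕ) (x y : {x : V // x ≠ v}) :
    (blowup G v k).Adj (Sum.inl x) (Sum.inl y) ↔ G.Adj x.1 y.1 := by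
  simp only [blowup, SimpleGraph.fromRel_adj]
  constructor
  · rintro ⟨-, h | h⟩
    · exact h
    · exact h.symm
  · intro h
    refine ⟨fun e => G.ne_of_adj h ?_, Or.inl h⟩
    injection e with e
    exact congrArg Subtype.val e

lemma blowup_adj_inl_inr (G : SimpleGraph V) (v : V) (k : ℕ) (x : {x : V // x ≠ v}) (i : Fin k) :
    (blowup G v k).Adj (Sum.inl x) (Sum.inr i) ↔ G.Adj x.1 v := by
  simp only [blowup, SimpleGraph.fromRel_adj]
  constructor
  · rintro ⟨-, h | h⟩
    · exact h
    · exact h.elim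
  · exact fun h => ⟨by simp, Or.inl h⟩

lemma blowup_adj_inr_inl (G : SimpleGraph V) (v : V) (k : ℕ) (x : {x : V // x ≠ v}) (i : Fin k) :
    (blowup G v k).Adj (Sum.inr i) (Sum.inl x) ↔ G.Adj x.1 v := by
  rw [SimpleGraph.adj_comm]; exact blowup_adj_inl_inr G v k x i

lemma blowup_adj_inr_inr (G : SimpleGraph V) (v : V) (k : ℕ) (i j : Fin k) :
    (blowup G v k).Adj (Sum.inr i) (Sum.inr j) ↔ i ≠ j := by
  simp only [blowup, SimpleGraph.fromRel_adj]
  constructor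
  · rintro ⟨h, -⟩
    exact fun e => h (by rw [e])
  · exact fun h => ⟨fun e => h (by injection e), Or.inl trivial⟩


lemma blowup_indepNum_le [DecidableEq V] (G : SimpleGraph V) (v : V) (k : ℕ) :
    _root_.indepNum (blowup G v k) ≤ _root_.indepNum G := by
  apply csSup_le (indep_nonempty _)
  rintro n ⟨s, hs, rfl⟩
  classical
  set g : ({x : V // x ≠ v} ⊕ Fin k) → V := Sum.elim Subtype.val (fun _ => v) with hg
  have hinj : Set.InjOn g s := by
    rintro a ha b hb hab
    by_contra hne
    match a, b with
    | Sum.inl x, Sum.inl y =>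
      exact hne (congrArg Sum.inl (Subtype.ext hab))
    | Sum.inl x, Sum.inr i => exact x.2 hab
    | Sum.inr i, Sum.inl y => exact y.2 hab.symm
    | Sum.inr i, Sum.inr j =>
      have hij : i ≠ j := fun h => hne (by rw [h])
      exact (hs ha hb hne) ((blowup_adj_inr_inr G v k i j).mpr hij)
  have hpair : (g '' s).Pairwise (fun x y => ¬ G.Adj x y) := by
    rintro _ ⟨a, ha, rfl⟩ _ ⟨b, hb, rfl⟩ hne hadj
    have hab : a ≠ b := fun h => hne (by rw [h])
    apply hs ha hb hab
    match a, b with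
    | Sum.inl x, Sum.inl y => exact (blowup_adj_inl_inl G v k x y).mpr hadj
    | Sum.inl x, Sum.inr i => exact (blowup_adj_inl_inr G v k x i).mpr hadj
    | Sum.inr i, Sum.inl y => exact (blowup_adj_inr_inl G v k y i).mpr hadj.symm
    | Sum.inr i, Sum.inr j => exact absurd hadj (G.irrefl)
  calc Nat.card s = Nat.card (g '' s) := (Nat.card_image_of_injOn hinj).symm
  _ ≤ _root_.indepNum G := le_indepNum _ _ hpair

lemma endpoints_mem (G : SimpleGraph V) {x y : V} (s : Set V)
    (hs : s.Pairwise (fun a b => ¬ (G.deleteEdges {s(x,y)}).Adj a b))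
    (hcard : _root_.indepNum G < Nat.card s) : x ∈ s ∧ y ∈ s := by
  have key : ∀ z, (z = x ∨ z = y) → z ∉ s → False := by
    intro z hz hzs
    have : s.Pairwise (fun a b => ¬ G.Adj a b) := by
      intro a ha b hb hab hadj
      refine hs ha hb hab ?_
      rw [SimpleGraph.deleteEdges_adj]
      refine ⟨hadj, ?_⟩
      simp only [Set.mem_singleton_iff, Sym2.eq_iff]
      rintro (⟨h1, h2⟩ | ⟨h1, h2⟩) <;> rcases hz with rfl | rfl <;>
        first
        | exact hzs (h1 ▸ ha)
        | exact hzs (h2 ▸ hb)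
    exact absurd (le_indepNum G s this) (not_le.mpr hcard)
  constructor
  · by_contra h; exact key x (Or.inl rfl) h
  · by_contra h; exact key y (Or.inr rfl) h

/-- Every vertex of an α-critical graph lies in some maximum independent set. -/
lemma exists_max_indep_mem (G : SimpleGraph V) (hcrit : AlphaCritical G) (v : V) :
    ∃ s : Set V, s.Pairwise (fun x y => ¬ G.Adj x y) ∧ Nat.card s = _root_.indepNum G ∧ v ∈ s := by
  by_cases hiso : ∃ u, G.Adj v u
  · obtain ⟨u, hu⟩ := hiso
    have hlt := hcrit (s(v, u)) (G.mem_edgeSet.mpr hu)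
    obtain ⟨s, hs, hcard⟩ := exists_max_indep (G.deleteEdges {s(v,u)})
    have hc : _root_.indepNum G < Nat.card s := hcard ▸ hlt
    obtain ⟨hvs, hus⟩ := endpoints_mem G s hs hc
    have hvu : v ≠ u := G.ne_of_adj hu
    refine ⟨s \ {u}, ?_, ?_, ⟨hvs, by simpa using hvu⟩⟩
    · rintro a ⟨ha, hau⟩ b ⟨hb, hbu⟩ hab hadj
      simp only [Set.mem_singleton_iff] at hau hbu
      refine hs ha hb hab ?_
      rw [SimpleGraph.deleteEdges_adj]
      refine ⟨hadj, ?_⟩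
      simp only [Set.mem_singleton_iff, Sym2.eq_iff]
      rintro (⟨h1, h2⟩ | ⟨h1, h2⟩)
      · exact hbu h2
      · exact hau h1
    · have h1 : Nat.card ↥(s \ {u}) = (s \ {u}).ncard := Nat.card_coe_set_eq _
      have h2 : Nat.card ↥s = s.ncard := Nat.card_coe_set_eq _
      have h3 : (s \ {u}).ncard = s.ncard - 1 := Set.ncard_diff_singleton_of_mem hus
      have hle : Nat.card ↥(s \ {u}) ≤ _root_.indepNum G := by
        apply le_indepNum
        rintro a ⟨ha, hau⟩ b ⟨hb, hbu⟩ hab hadj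
        simp only [Set.mem_singleton_iff] at hau hbu
        refine hs ha hb hab ?_
        rw [SimpleGraph.deleteEdges_adj]
        refine ⟨hadj, ?_⟩
        simp only [Set.mem_singleton_iff, Sym2.eq_iff]
        rintro (⟨h1, h2⟩ | ⟨h1, h2⟩)
        · exact hbu h2
        · exact hau h1
      omega
  · push_neg at hiso
    obtain ⟨s, hs, hcard⟩ := exists_max_indep G
    by_cases hv : v ∈ s
    · exact ⟨s, hs, hcard, hv⟩
    · exfalso
      have hpair : (insert v s).Pairwise (fun x y => ¬ G.Adj x y) := by
        haveI : Std.Symm (fun x y : V => ¬ G.Adj x y) := ⟨fun _ _ h hadj => h hadj.symm⟩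
        rw [Set.pairwise_insert_of_symm (r := fun x y => ¬ G.Adj x y)]
        exact ⟨hs, fun b _ _ => hiso b⟩
      have hle := le_indepNum G _ hpair
      have h1 : Nat.card ↥(insert v s) = (insert v s).ncard := Nat.card_coe_set_eq _
      have h2 : Nat.card ↥s = s.ncard := Nat.card_coe_set_eq _
      have h3 : (insert v s).ncard = s.ncard + 1 := Set.ncard_insert_of_notMem hv
      omega

/-- The embedding of `V` into the blown-up vertex set, sending `v` to clique vertex `i`. -/
def up [DecidableEq V] (v : V) {k : ℕ} (i : Fin k) (a : V) : {x : V // x ≠ v} ⊕ Fin k :=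
  if h : a = v then Sum.inr i else Sum.inl ⟨a, h⟩

omit [Fintype V] in
lemma up_injective [DecidableEq V] (v : V) {k : ℕ} (i : Fin k) :
    Function.Injective (up v i) := by
  intro a b hab
  unfold up at hab
  split_ifs at hab with h1 h2 h2 <;>
    first
    | exact h1.trans h2.symm
    | simpa using hab

omit [Fintype V] in
lemma up_ne_v [DecidableEq V] {v a : V} {k : ℕ} {i : Fin k} (h : a ≠ v) :
    up v i a = Sum.inl ⟨a, h⟩ := dif_neg h

omit [Fintype V] in
lemma up_v [DecidableEq V] (v : V) {k : ℕ} (i : Fin k) :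
    up v i v = Sum.inr i := dif_pos rfl

/-- Case A: deleting an edge between two non-clique vertices. -/
lemma caseA [DecidableEq V] (G : SimpleGraph V) (v : V) (k : ℕ) (hk : 0 < k)
    (hcrit : AlphaCritical G) (x y : {x : V // x ≠ v}) (hxy : G.Adj x.1 y.1) :
    _root_.indepNum G < _root_.indepNum ((blowup G v k).deleteEdges {s(Sum.inl x, Sum.inl y)}) := by
  have hlt := hcrit (s(x.1, y.1)) (G.mem_edgeSet.mpr hxy)
  obtain ⟨s, hs, hcard⟩ := exists_max_indep (G.deleteEdges {s(x.1, y.1)})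
  have hc : _root_.indepNum G < Nat.card s := hcard ▸ hlt
  set i : Fin k := ⟨0, hk⟩
  have hT : Nat.card ↥(up v i '' s) = Nat.card ↥s :=
    Nat.card_image_of_injOn (up_injective v i).injOn
  refine lt_of_lt_of_le hc (hT ▸ le_indepNum _ _ ?_)
  rintro _ ⟨a, ha, rfl⟩ _ ⟨b, hb, rfl⟩ hne hadj
  have hab : a ≠ b := fun h => hne (by rw [h])
  have hns := hs ha hb hab
  rw [SimpleGraph.deleteEdges_adj] at hadj hns
  push_neg at hns
  simp only [Set.mem_singleton_iff] at hadj hns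
  by_cases hav : a = v <;> by_cases hbv : b = v
  · exact hab (hav.trans hbv.symm)
  · -- a = v, b ≠ v : up a = inr i, up b = inl b
    subst hav
    rw [up_v, up_ne_v hbv, blowup_adj_inr_inl] at hadj
    have : ¬ G.Adj a b := by
      intro hGab
      have := hns hGab
      rw [Sym2.eq_iff] at this
      rcases this with ⟨h1, h2⟩ | ⟨h1, h2⟩
      · exact x.2 h1.symm
      · exact y.2 h1.symm
    exact this hadj.1.symm
  · subst hbv
    rw [up_v, up_ne_v hav, blowup_adj_inl_inr] at hadj
    have : ¬ G.Adj a b := by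
      intro hGab
      have := hns hGab
      rw [Sym2.eq_iff] at this
      rcases this with ⟨h1, h2⟩ | ⟨h1, h2⟩
      · exact y.2 h2.symm
      · exact x.2 h2.symm
    exact this hadj.1
  · rw [up_ne_v hav, up_ne_v hbv, blowup_adj_inl_inl] at hadj
    have hGab : G.Adj a b := hadj.1
    have heq := hns hGab
    rw [Sym2.eq_iff] at heq
    apply hadj.2
    rw [Sym2.eq_iff]
    rcases heq with ⟨h1, h2⟩ | ⟨h1, h2⟩
    · exact Or.inl ⟨congrArg Sum.inl (Subtype.ext h1), congrArg Sum.inl (Subtype.ext h2)⟩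
    · exact Or.inr ⟨congrArg Sum.inl (Subtype.ext h1), congrArg Sum.inl (Subtype.ext h2)⟩

/-- Case B: deleting an edge between a non-clique vertex and a clique vertex. -/
lemma caseB [DecidableEq V] (G : SimpleGraph V) (v : V) (k : ℕ)
    (hcrit : AlphaCritical G) (x : {x : V // x ≠ v}) (i : Fin k) (hxv : G.Adj x.1 v) :
    _root_.indepNum G < _root_.indepNum ((blowup G v k).deleteEdges {s(Sum.inl x, Sum.inr i)}) := by
  have hlt := hcrit (s(x.1, v)) (G.mem_edgeSet.mpr hxv)
  obtain ⟨s, hs, hcard⟩ := exists_max_indep (G.deleteEdges {s(x.1, v)})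
  have hc : _root_.indepNum G < Nat.card s := hcard ▸ hlt
  obtain ⟨hxs, hvs⟩ := endpoints_mem G s hs hc
  have hT : Nat.card ↥(up v i '' s) = Nat.card ↥s :=
    Nat.card_image_of_injOn (up_injective v i).injOn
  refine lt_of_lt_of_le hc (hT ▸ le_indepNum _ _ ?_)
  rintro _ ⟨a, ha, rfl⟩ _ ⟨b, hb, rfl⟩ hne hadj
  have hab : a ≠ b := fun h => hne (by rw [h])
  have hns := hs ha hb hab
  rw [SimpleGraph.deleteEdges_adj] at hadj hns
  push_neg at hns
  simp only [Set.mem_singleton_iff] at hadj hns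
  by_cases hav : a = v <;> by_cases hbv : b = v
  · exact hab (hav.trans hbv.symm)
  · -- a = v, b ≠ v : up a = inr i, up b = inl ⟨b,_⟩
    subst hav
    rw [up_v, up_ne_v hbv, blowup_adj_inr_inl] at hadj
    by_cases hbx : b = x.1
    · -- the deleted edge
      apply hadj.2
      rw [Sym2.eq_iff]
      exact Or.inr ⟨rfl, congrArg Sum.inl (Subtype.ext hbx)⟩
    · have hGab := hadj.1.symm
      have heq := hns hGab
      rw [Sym2.eq_iff] at heq
      rcases heq with ⟨h1, h2⟩ | ⟨h1, h2⟩
      · exact x.2 h1.symm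
      · exact hbx h2
  · subst hbv
    rw [up_v, up_ne_v hav, blowup_adj_inl_inr] at hadj
    by_cases hax : a = x.1
    · apply hadj.2
      rw [Sym2.eq_iff]
      exact Or.inl ⟨congrArg Sum.inl (Subtype.ext hax), rfl⟩
    · have hGab := hadj.1
      have heq := hns hGab
      rw [Sym2.eq_iff] at heq
      rcases heq with ⟨h1, h2⟩ | ⟨h1, h2⟩
      · exact hax h1
      · exact x.2 h2.symm
  · rw [up_ne_v hav, up_ne_v hbv, blowup_adj_inl_inl] at hadj
    have hGab : G.Adj a b := hadj.1
    have heq := hns hGab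
    rw [Sym2.eq_iff] at heq
    rcases heq with ⟨h1, h2⟩ | ⟨h1, h2⟩
    · exact hbv h2
    · exact hav h1

/-- Case C: deleting an edge between two clique vertices. -/
lemma caseC [DecidableEq V] (G : SimpleGraph V) (v : V) (k : ℕ)
    (hcrit : AlphaCritical G) (i j : Fin k) (hij : i ≠ j) :
    _root_.indepNum G < _root_.indepNum ((blowup G v k).deleteEdges {s(Sum.inr i, Sum.inr j)}) := by
  obtain ⟨s, hs, hcard, hvs⟩ := exists_max_indep_mem G hcrit v
  set T : Set ({x : V // x ≠ v} ⊕ Fin k) := insert (Sum.inr j) (up v i '' s) with hTdef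
  have hjT : (Sum.inr j : {x : V // x ≠ v} ⊕ Fin k) ∉ up v i '' s := by
    rintro ⟨a, ha, hb⟩
    by_cases h : a = v
    · rw [h, up_v, Sum.inr.injEq] at hb
      exact hij hb
    · rw [up_ne_v h] at hb
      exact absurd hb (by simp)
  have hcardT : Nat.card ↥T = _root_.indepNum G + 1 := by
    have h1 : Nat.card ↥T = T.ncard := Nat.card_coe_set_eq _
    have h2 : Nat.card ↥(up v i '' s) = (up v i '' s).ncard := Nat.card_coe_set_eq _
    have h3 : T.ncard = (up v i '' s).ncard + 1 := Set.ncard_insert_of_notMem hjT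
    have h4 : Nat.card ↥(up v i '' s) = Nat.card ↥s :=
      Nat.card_image_of_injOn (up_injective v i).injOn
    omega
  have hpair : T.Pairwise (fun p q => ¬ ((blowup G v k).deleteEdges {s(Sum.inr i, Sum.inr j)}).Adj p q) := by
    haveI : Std.Symm (fun p q => ¬ ((blowup G v k).deleteEdges {s(Sum.inr i, Sum.inr j)}).Adj p q) :=
      ⟨fun _ _ h hadj => h hadj.symm⟩
    rw [hTdef, Set.pairwise_insert_of_symm
      (r := fun p q => ¬ ((blowup G v k).deleteEdges {s(Sum.inr i, Sum.inr j)}).Adj p q)]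
    constructor
    · -- pairs within the image
      rintro _ ⟨a, ha, rfl⟩ _ ⟨b, hb, rfl⟩ hne hadj
      have hab : a ≠ b := fun h => hne (by rw [h])
      have hns := hs ha hb hab
      rw [SimpleGraph.deleteEdges_adj] at hadj
      by_cases hav : a = v <;> by_cases hbv : b = v
      · exact hab (hav.trans hbv.symm)
      · subst hav
        rw [up_v, up_ne_v hbv, blowup_adj_inr_inl] at hadj
        exact hns hadj.1.symm
      · subst hbv
        rw [up_v, up_ne_v hav, blowup_adj_inl_inr] at hadj
        exact hns hadj.1
      · rw [up_ne_v hav, up_ne_v hbv, blowup_adj_inl_inl] at hadj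
        exact hns hadj.1
    · -- inr j versus image elements
      rintro _ ⟨a, ha, rfl⟩ hne hadj
      rw [SimpleGraph.deleteEdges_adj] at hadj
      by_cases hav : a = v
      · subst hav
        rw [up_v] at hadj
        apply hadj.2
        rw [Set.mem_singleton_iff, Sym2.eq_iff]
        exact Or.inr ⟨rfl, rfl⟩
      · rw [up_ne_v hav, blowup_adj_inr_inl] at hadj
        exact hs ha hvs hav hadj.1
  have := le_indepNum _ _ hpair
  omega


lemma main_aux {V : Type*} [Fintype V] [DecidableEq V]
    (G : SimpleGraph V) (v : V) (k : ℕ) (hk : 0 < k)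
    (hcrit : AlphaCritical G) :
    AlphaCritical (blowup G v k) := by
  intro e he
  induction e using Sym2.ind with
  | _ p q =>
    rw [SimpleGraph.mem_edgeSet] at he
    have hle := blowup_indepNum_le G v k
    match p, q with
    | Sum.inl x, Sum.inl y =>
      exact lt_of_le_of_lt hle (caseA G v k hk hcrit x y ((blowup_adj_inl_inl G v k x y).mp he))
    | Sum.inl x, Sum.inr i =>
      exact lt_of_le_of_lt hle (caseB G v k hcrit x i ((blowup_adj_inl_inr G v k x i).mp he))
    | Sum.inr i, Sum.inl x =>
      rw [Sym2.eq_swap]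
      exact lt_of_le_of_lt hle (caseB G v k hcrit x i ((blowup_adj_inr_inl G v k x i).mp he))
    | Sum.inr i, Sum.inr j =>
      exact lt_of_le_of_lt hle (caseC G v k hcrit i j ((blowup_adj_inr_inr G v k i j).mp he))

end Aux

theorem stmt9 {V : Type*} [Fintype V] [DecidableEq V]
    (G : SimpleGraph V) (v : V) (k : ℕ) (hk : 0 < k)
    (hcrit : AlphaCritical G) :
    AlphaCritical (blowup G v k) := by
  exact main_aux G v k hk hcrit
end
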